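/- The matrix M_s(ν_1,…,ν_s,τ_1,…,τ_s) is a presentation matrix of the ℤ[G]-module 𝓘_I = ker(ℤ[G] → ℤ[G/I]). Precisely: (i) 𝓘_I is generated by τ_1,…,τ_s; (ii) the kernel of the surjective ℤ[G]-linear map ℤ[G]^s → 𝓘_I sending the l-th standard basis vector e_l to τ_l is generated by the elements ν_l·e_l (1 ≤ l ≤ s) together with the elements τ_l·e_{l'} − τ_{l'}·e_l (1 ≤ l < l' ≤ s). -/

import Mathlib

open MonoidAlgebra Finset

/-- The sum `ν_H = Σ_{σ ∈ H} σ` of the elements of a subgroup `H` in the group algebra. -/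
noncomputable def nuElt (R : Type) [CommRing R] {G : Type} [CommGroup G] [Fintype G]
    (H : Subgroup G) : MonoidAlgebra R G :=
  letI := Classical.decPred (· ∈ H)
  ∑ σ ∈ Finset.univ.filter (· ∈ H), MonoidAlgebra.of R G σ

/-- `Fitt_i(A)`: the ideal generated by the `(n-i) × (n-i)` minors of a matrix `A`
with `n` columns (so `Fitt_i(A) = (1)` for `i ≥ n`, and `(0)` if `A` has fewer than
`n - i` rows). -/
noncomputable def fittMat {R : Type} [CommRing R] {m n : Type} [Fintype m] [Fintype n]
    (A : Matrix m n R) (i : ℕ) : Ideal R :=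
  Ideal.span {x : R |
    ∃ (r : Fin (Fintype.card n - i) → m) (c : Fin (Fintype.card n - i) → n),
      x = (A.submatrix r c).det}

/-- The index type for the rows of `N_s`: pairs `l < l'`. -/
abbrev rowPairs (s : ℕ) := {p : Fin s × Fin s // p.1 < p.2}

/-- The matrix `N_s(t_1, …, t_s)`: row `(l, l')` has `-t_{l'}` in column `l`,
`t_l` in column `l'`, and `0` elsewhere. -/
noncomputable def Nmat {R : Type} [CommRing R] {s : ℕ} (t : Fin s → R) :
    Matrix (rowPairs s) (Fin s) R :=
  fun p l => if l = p.val.1 then -t p.val.2 else if l = p.val.2 then t p.val.1 else 0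

/-- The matrix `M_s(ν_1, …, ν_s, τ_1, …, τ_s)`: `N_s(τ_1, …, τ_s)` with `s` extra rows
appended, the `l`-th of which has `ν_l` in column `l` and `0` elsewhere. -/
noncomputable def Mmat {R : Type} [CommRing R] {s : ℕ} (ν t : Fin s → R) :
    Matrix (Fin s ⊕ rowPairs s) (Fin s) R :=
  Sum.elim (fun l l' => if l' = l then ν l else 0) (Nmat t)

/-- `I = I_1 × ⋯ × I_s` where `I_l` is the (possibly trivial) cyclic subgroup generated
by `σ l`: every element of `I` is, in a unique way, the product of elements of the
subgroups `⟨σ l⟩`. -/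
def IsDecomp {G : Type} [CommGroup G] (I : Subgroup G) {s : ℕ} (σ : Fin s → G) : Prop :=
  (∀ l, σ l ∈ I) ∧
    ∀ g ∈ I, ∃! x : ∀ l, Subgroup.zpowers (σ l), (∏ l, ((x l : G))) = g

/-- The ideal `Z_i` generated by the products `ν_{l_1} ⋯ ν_{l_{s-i}}` over all
`(s-i)`-element subsets `{l_1 < ⋯ < l_{s-i}}` of `{1, …, s}`. -/
noncomputable def Zideal {G : Type} [CommGroup G] [Fintype G] {s : ℕ} (σ : Fin s → G)
    (i : ℕ) : Ideal (MonoidAlgebra ℤ G) :=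
  Ideal.span {x | ∃ T : Finset (Fin s), T.card = s - i ∧
    x = ∏ l ∈ T, nuElt ℤ (Subgroup.zpowers (σ l))}

/-- The augmentation-type kernel ideal `𝓘_H = ker(ℤ[G] → ℤ[G/H])`. -/
noncomputable def kerIdeal {G : Type} [CommGroup G] [Fintype G] (H : Subgroup G) :
    Ideal (MonoidAlgebra ℤ G) :=
  RingHom.ker (MonoidAlgebra.mapDomainRingHom ℤ (QuotientGroup.mk' H))


section Helpers
variable {G : Type} [CommGroup G] [Fintype G]

lemma sum_single_eq [Fintype G] (x : MonoidAlgebra ℤ G) :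
    x = ∑ g ∈ Finset.univ, MonoidAlgebra.single g (x.coeff g) := by
  classical
  apply MonoidAlgebra.coeff_injective
  rw [MonoidAlgebra.coeff_sum]
  conv_lhs => rw [← Finsupp.sum_single x.coeff]
  rw [Finsupp.sum_fintype]
  · rfl
  intro a; exact Finsupp.single_zero _



lemma of_sub_one_mem {S : Set G} {h : G} (hh : h ∈ Subgroup.closure S) :
    MonoidAlgebra.of ℤ G h - 1 ∈ Ideal.span ((fun s => MonoidAlgebra.of ℤ G s - 1) '' S) := by
  induction hh using Subgroup.closure_induction with
  | mem x hx => exact Ideal.subset_span ⟨x, hx, rfl⟩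
  | one => rw [show ((of ℤ G) 1 : MonoidAlgebra ℤ G) = 1 from map_one _]; simp
  | mul x y _ _ hx hy =>
      have h1 : of ℤ G (x*y) - 1 = of ℤ G x * (of ℤ G y - 1) + (of ℤ G x - 1) := by
        rw [map_mul]; ring
      rw [h1]; exact add_mem (Ideal.mul_mem_left _ _ hy) hx
  | inv x _ hx =>
      have h1 : of ℤ G x⁻¹ - 1 = -(of ℤ G x⁻¹ * (of ℤ G x - 1)) := by
        rw [mul_sub, ← map_mul, inv_mul_cancel, map_one, mul_one, neg_sub]
      rw [h1]; exact neg_mem (Ideal.mul_mem_left _ _ hx)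

lemma mapDomain_apply_filter [Fintype G] {Q : Type} [DecidableEq Q] (f : G → Q)
    (x : MonoidAlgebra ℤ G) (q : Q) :
    Finsupp.mapDomain f x.coeff q = ∑ g ∈ Finset.univ.filter (fun g => f g = q), x.coeff g := by
  classical
  have h1 : Finsupp.mapDomain f x.coeff = ∑ a ∈ Finset.univ, Finsupp.single (f a) (x.coeff a) := by
    rw [Finsupp.mapDomain]
    rw [Finsupp.sum_fintype]
    intro a; exact Finsupp.single_zero _
  rw [h1, Finsupp.finset_sum_apply, Finset.sum_filter]
  congr 1; ext a
  rw [Finsupp.single_apply]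


lemma ker_mk_eq_span [Fintype G] (H : Subgroup G) :
    RingHom.ker (MonoidAlgebra.mapDomainRingHom ℤ (QuotientGroup.mk' H)) =
      Ideal.span {x | ∃ h ∈ H, x = MonoidAlgebra.of ℤ G h - 1} := by
  classical
  letI : Fintype (G ⧸ H) := Fintype.ofFinite _
  apply le_antisymm
  · intro x hx
    rw [RingHom.mem_ker] at hx
    have hx' : ∀ q : G ⧸ H, ∑ g ∈ Finset.univ.filter (fun g => QuotientGroup.mk' H g = q), x.coeff g = 0 := by
      intro q
      have : Finsupp.mapDomain (QuotientGroup.mk' H) x.coeff q = 0 := by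
        rw [show (Finsupp.mapDomain (QuotientGroup.mk' H) x.coeff) =
          (MonoidAlgebra.mapDomainRingHom ℤ (QuotientGroup.mk' H) x).coeff from rfl, hx]; rfl
      rw [← this]
      -- mapDomain_apply_filter
      have h1 : Finsupp.mapDomain (QuotientGroup.mk' H) x.coeff = ∑ a ∈ Finset.univ, Finsupp.single (QuotientGroup.mk' H a) (x.coeff a) := by
        rw [Finsupp.mapDomain, Finsupp.sum_fintype]
        intro a; exact Finsupp.single_zero _
      rw [h1, Finsupp.finset_sum_apply, Finset.sum_filter]
      apply Finset.sum_congr rfl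
      intro a _
      rw [Finsupp.single_apply]
    have hxsum := sum_single_eq x
    rw [← Finset.sum_fiberwise Finset.univ (fun g => (QuotientGroup.mk' H g : G ⧸ H))
      (fun g => MonoidAlgebra.single g (x.coeff g))] at hxsum
    rw [hxsum]
    apply Ideal.sum_mem
    intro q _
    have key : ∀ g ∈ Finset.univ.filter (fun g => QuotientGroup.mk' H g = q),
        (MonoidAlgebra.single g (x.coeff g) : MonoidAlgebra ℤ G)
          = x.coeff g • (MonoidAlgebra.of ℤ G g - MonoidAlgebra.of ℤ G q.out) + x.coeff g • MonoidAlgebra.of ℤ G q.out := by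
      intro g _
      rw [smul_sub, sub_add_cancel]
      simp [MonoidAlgebra.of_apply, Finsupp.smul_single]
    rw [Finset.sum_congr rfl key, Finset.sum_add_distrib, ← Finset.sum_smul]
    apply add_mem
    · apply Ideal.sum_mem
      intro g hg
      apply Submodule.smul_of_tower_mem
      have hmem : q.out⁻¹ * g ∈ H := by
        rw [Finset.mem_filter] at hg
        have h2 : (QuotientGroup.mk q.out : G ⧸ H) = QuotientGroup.mk g := by
          have h3 : (QuotientGroup.mk' H) q.out = q := QuotientGroup.out_eq' q
          rw [show (QuotientGroup.mk q.out : G ⧸ H) = (QuotientGroup.mk' H) q.out from rfl, h3,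
            ← hg.2]; rfl
        exact QuotientGroup.eq.mp h2
      have : MonoidAlgebra.of ℤ G g - MonoidAlgebra.of ℤ G q.out
          = MonoidAlgebra.of ℤ G q.out * (MonoidAlgebra.of ℤ G (q.out⁻¹ * g) - 1) := by
        rw [mul_sub, ← map_mul, mul_inv_cancel_left, mul_one]
      rw [this]
      exact Ideal.mul_mem_left _ _ (Ideal.subset_span ⟨_, hmem, rfl⟩)
    · rw [hx' q, zero_smul]
      exact zero_mem _
  · rw [Ideal.span_le]
    rintro _ ⟨h, hh, rfl⟩
    rw [SetLike.mem_coe, RingHom.mem_ker, map_sub, map_one]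
    have : (MonoidAlgebra.mapDomainRingHom ℤ (QuotientGroup.mk' H)) (MonoidAlgebra.of ℤ G h)
        = MonoidAlgebra.of ℤ (G ⧸ H) (QuotientGroup.mk' H h) := by
      simp [MonoidAlgebra.mapDomainRingHom, MonoidAlgebra.of_apply]
    have h1 : (QuotientGroup.mk' H) h = 1 := (QuotientGroup.eq_one_iff h).2 hh
    rw [this, h1, map_one, sub_self]

lemma nu_mul_of_mem {H : Subgroup G} {σ : G} (hσ : σ ∈ H) :
    nuElt ℤ H * MonoidAlgebra.of ℤ G σ = nuElt ℤ H := by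
  letI := Classical.decPred (· ∈ H)
  show (∑ h ∈ Finset.univ.filter (· ∈ H), MonoidAlgebra.of ℤ G h) * MonoidAlgebra.of ℤ G σ
      = ∑ h ∈ Finset.univ.filter (· ∈ H), MonoidAlgebra.of ℤ G h
  rw [Finset.sum_mul]
  refine Finset.sum_nbij' (fun h => h * σ) (fun h => h * σ⁻¹) ?_ ?_ ?_ ?_ ?_
  · intro a ha; simp only [Finset.mem_filter, Finset.mem_univ, true_and] at ha ⊢
    exact H.mul_mem ha hσ
  · intro a ha; simp only [Finset.mem_filter, Finset.mem_univ, true_and] at ha ⊢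
    exact H.mul_mem ha (H.inv_mem hσ)
  · intro a _; group
  · intro a _; group
  · intro a _; rw [← map_mul]

lemma nu_mul_tau (σ : G) :
    nuElt ℤ (Subgroup.zpowers σ) * (MonoidAlgebra.of ℤ G σ - 1) = 0 := by
  rw [mul_sub, mul_one, nu_mul_of_mem (Subgroup.mem_zpowers σ), sub_self]

lemma mem_span_nu {σ : G} {x : MonoidAlgebra ℤ G}
    (hx : x * (MonoidAlgebra.of ℤ G σ - 1) = 0) :
    x ∈ Ideal.span {nuElt ℤ (Subgroup.zpowers σ)} := by
  classical
  set H := Subgroup.zpowers σ with hH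
  letI : Fintype (G ⧸ H) := Fintype.ofFinite _
  letI := Classical.decPred (· ∈ H)
  have hinv : ∀ h ∈ H, ∀ g, x.coeff (g * h) = x.coeff g := by
    have hx1 : ∀ g, x.coeff (g * σ) = x.coeff g := by
      intro g
      have h2 : x * MonoidAlgebra.single σ 1 = x := by
        have : x * (MonoidAlgebra.of ℤ G σ - 1) = x * MonoidAlgebra.single σ 1 - x := by
          rw [mul_sub, mul_one]; rfl
        rw [this] at hx; exact sub_eq_zero.mp hx
      have h3 := MonoidAlgebra.coeff_mul_single_apply x 1 σ (g * σ)
      rw [h2, mul_inv_cancel_right, mul_one] at h3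
      exact h3
    set T : Subgroup G :=
      { carrier := {t | ∀ g, x.coeff (g * t) = x.coeff g}
        one_mem' := by intro g; rw [mul_one]
        mul_mem' := by
          intro a b ha hb g
          rw [← mul_assoc, hb, ha]
        inv_mem' := by
          intro a ha g
          have := ha (g * a⁻¹)
          rw [inv_mul_cancel_right] at this
          exact this.symm } with hT
    intro h hh g
    have hle : H ≤ T := Subgroup.zpowers_le.mpr hx1
    exact hle hh g
  rw [Ideal.mem_span_singleton']
  refine ⟨∑ q : G ⧸ H, MonoidAlgebra.single q.out (x.coeff q.out), ?_⟩
  have hnu : nuElt ℤ H = ∑ h ∈ Finset.univ.filter (· ∈ H), MonoidAlgebra.single h (1:ℤ) := rfl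
  have hR : ((∑ q : G ⧸ H, MonoidAlgebra.single q.out (x.coeff q.out) : MonoidAlgebra ℤ G)) * nuElt ℤ H
      = ∑ q : G ⧸ H, ∑ h ∈ Finset.univ.filter (· ∈ H),
          MonoidAlgebra.single (q.out * h) (x.coeff q.out) := by
    rw [hnu, Finset.sum_mul]
    simp only [Finset.mul_sum]
    refine Finset.sum_congr rfl fun q _ => Finset.sum_congr rfl fun h _ => ?_
    rw [show (MonoidAlgebra.single q.out (x.coeff q.out) : MonoidAlgebra ℤ G)
        = MonoidAlgebra.single q.out (x.coeff q.out) from rfl,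
      MonoidAlgebra.single_mul_single, mul_one]
  have hX : x = ∑ q : G ⧸ H, ∑ g ∈ Finset.univ.filter (fun g => (QuotientGroup.mk g : G ⧸ H) = q),
      MonoidAlgebra.single g (x.coeff g) := by
    conv_lhs => rw [sum_single_eq x]
    rw [Finset.sum_fiberwise Finset.univ (fun g => (QuotientGroup.mk g : G ⧸ H))
      (fun g => MonoidAlgebra.single g (x.coeff g))]
  rw [hR]; conv_rhs => rw [hX]
  apply Finset.sum_congr rfl
  intro q _
  refine Finset.sum_nbij' (fun h => q.out * h) (fun g => q.out⁻¹ * g) ?_ ?_ ?_ ?_ ?_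
  · intro h hh
    simp only [Finset.mem_filter, Finset.mem_univ, true_and] at hh ⊢
    have : (QuotientGroup.mk (q.out * h) : G ⧸ H) = QuotientGroup.mk q.out := by
      rw [eq_comm]; exact QuotientGroup.eq.mpr (by simpa using hh)
    rw [this, QuotientGroup.out_eq']
  · intro g hg
    simp only [Finset.mem_filter, Finset.mem_univ, true_and] at hg ⊢
    have : (QuotientGroup.mk q.out : G ⧸ H) = QuotientGroup.mk g := by
      rw [QuotientGroup.out_eq', ← hg]
    exact QuotientGroup.eq.mp this
  · intro a _; group
  · intro a _; group
  · intro h hh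
    simp only [Finset.mem_filter, Finset.mem_univ, true_and] at hh
    rw [hinv h hh q.out]

/-- one-at-one-spot family -/
noncomputable def oneSpot {s : ℕ} (σ : Fin s → G) (l0 : Fin s) (c : G)
    (hc : c ∈ Subgroup.zpowers (σ l0)) : ∀ l, Subgroup.zpowers (σ l) :=
  Function.update (fun l => (1 : Subgroup.zpowers (σ l))) l0 ⟨c, hc⟩

lemma oneSpot_prod {s : ℕ} (σ : Fin s → G) (l0 : Fin s) (c : G)
    (hc : c ∈ Subgroup.zpowers (σ l0)) :
    (∏ l, ((oneSpot σ l0 c hc l : G))) = c := by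
  classical
  rw [Finset.prod_eq_single l0]
  · rw [oneSpot, Function.update_self]
  · intro b _ hb
    rw [oneSpot, Function.update_of_ne hb]; rfl
  · intro h; exact absurd (Finset.mem_univ l0) h

/-- intersection of the cyclic factors is trivial -/
lemma decomp_inter_trivial {s : ℕ} {I : Subgroup G} {σ : Fin s → G} (hdec : IsDecomp I σ)
    {l m : Fin s} (hlm : l ≠ m) {c : G} (hcl : c ∈ Subgroup.zpowers (σ l))
    (hcm : c ∈ Subgroup.zpowers (σ m)) : c = 1 := by
  have hcI : c ∈ I := (Subgroup.zpowers_le.mpr (hdec.1 l)) hcl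
  obtain ⟨x, -, huniq⟩ := hdec.2 c hcI
  have h1 := huniq (oneSpot σ l c hcl) (oneSpot_prod σ l c hcl)
  have h2 := huniq (oneSpot σ m c hcm) (oneSpot_prod σ m c hcm)
  have h3 : oneSpot σ l c hcl m = oneSpot σ m c hcm m := by rw [h1, h2]
  rw [oneSpot, oneSpot, Function.update_of_ne (Ne.symm hlm), Function.update_self] at h3
  have : (1 : G) = c := congrArg Subtype.val h3
  exact this.symm

lemma decomp_quot {s : ℕ} {I : Subgroup G} {σ : Fin (s+1) → G} (hdec : IsDecomp I σ) :
    IsDecomp (I.map (QuotientGroup.mk' (Subgroup.zpowers (σ (Fin.last s)))))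
      (fun l : Fin s =>
        (QuotientGroup.mk (σ l.castSucc) : G ⧸ Subgroup.zpowers (σ (Fin.last s)))) := by
  set K := Subgroup.zpowers (σ (Fin.last s)) with hK
  constructor
  · intro l
    exact ⟨σ l.castSucc, hdec.1 _, rfl⟩
  · rintro g' ⟨g, hg, rfl⟩
    obtain ⟨x, hx, -⟩ := hdec.2 g hg
    have hmem : ∀ l : Fin s, (QuotientGroup.mk ((x l.castSucc : G)) : G ⧸ K)
        ∈ Subgroup.zpowers ((QuotientGroup.mk (σ l.castSucc) : G ⧸ K)) := by
      intro l
      obtain ⟨k, hk⟩ := Subgroup.mem_zpowers_iff.mp (x l.castSucc).2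
      exact Subgroup.mem_zpowers_iff.mpr ⟨k, by rw [← hk, QuotientGroup.mk_zpow]⟩
    refine ⟨fun l => ⟨QuotientGroup.mk ((x l.castSucc : G)), hmem l⟩, ?_, ?_⟩
    · show (∏ l : Fin s, (QuotientGroup.mk ((x l.castSucc : G)) : G ⧸ K)) = _
      have h1 : (∏ l : Fin s, (QuotientGroup.mk ((x l.castSucc : G)) : G ⧸ K))
          = QuotientGroup.mk (∏ l : Fin s, ((x l.castSucc : G))) := by
        rw [QuotientGroup.mk_prod]
      have h2 : g = (∏ l : Fin s, ((x l.castSucc : G))) * (x (Fin.last s) : G) := by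
        rw [← hx, Fin.prod_univ_castSucc]
      have h3 : (QuotientGroup.mk ((x (Fin.last s) : G)) : G ⧸ K) = 1 :=
        (QuotientGroup.eq_one_iff _).mpr (x (Fin.last s)).2
      rw [h1]
      show _ = (QuotientGroup.mk' K) g
      rw [h2, map_mul, show ((QuotientGroup.mk' K) ((x (Fin.last s) : G))) = 1 from h3, mul_one]
      rfl
    · intro y' hy'
      have hlift : ∀ l : Fin s, ∃ w : G, w ∈ Subgroup.zpowers (σ l.castSucc) ∧
          (QuotientGroup.mk w : G ⧸ K) = (y' l : G ⧸ K) := by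
        intro l
        obtain ⟨k, hk⟩ := Subgroup.mem_zpowers_iff.mp (y' l).2
        refine ⟨σ l.castSucc ^ k, Subgroup.mem_zpowers_iff.mpr ⟨k, rfl⟩, ?_⟩
        rw [← hk, QuotientGroup.mk_zpow]
      choose w hw hmkw using hlift
      have hg0 : (QuotientGroup.mk (∏ l : Fin s, w l) : G ⧸ K) = QuotientGroup.mk g := by
        rw [QuotientGroup.mk_prod]
        rw [show (∏ l : Fin s, (QuotientGroup.mk (w l) : G ⧸ K)) = ∏ l : Fin s, ((y' l : G ⧸ K))
          from Finset.prod_congr rfl fun l _ => hmkw l]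
        exact hy'
      have hhK : (∏ l : Fin s, w l)⁻¹ * g ∈ K := QuotientGroup.eq.mp hg0
      set h : G := (∏ l : Fin s, w l)⁻¹ * g with hh
      have hYprod : (∏ l : Fin (s+1),
          ((Fin.lastCases (motive := fun l => Subgroup.zpowers (σ l)) ⟨h, hhK⟩
            (fun l => ⟨w l, hw l⟩) l : G))) = g := by
        rw [Fin.prod_univ_castSucc]
        simp only [Fin.lastCases_castSucc, Fin.lastCases_last]
        rw [hh, mul_inv_cancel_left]
      obtain ⟨x2, hx2, huniq2⟩ := hdec.2 g hg
      have e1 := huniq2 _ hYprod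
      have e2 := huniq2 x hx
      have e3 : ∀ l : Fin (s+1),
          (Fin.lastCases (motive := fun l => Subgroup.zpowers (σ l)) ⟨h, hhK⟩
            (fun l => ⟨w l, hw l⟩) l) = x l := by
        rw [e1, e2]; intro l; rfl
      funext l
      have e4 := e3 l.castSucc
      rw [Fin.lastCases_castSucc] at e4
      have e5 : w l = (x l.castSucc : G) := congrArg Subtype.val e4
      apply Subtype.ext
      show (y' l : G ⧸ K) = QuotientGroup.mk ((x l.castSucc : G))
      rw [← hmkw l, e5]


/-- The generating set of the relation module. -/
def genSet {G : Type} [CommGroup G] [Fintype G] {s : ℕ} (σ : Fin s → G) :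
    Set (Fin s → MonoidAlgebra ℤ G) :=
  (Set.range fun l => Pi.single l (nuElt ℤ (Subgroup.zpowers (σ l)))) ∪
    {v | ∃ l l' : Fin s, l < l' ∧
      v = Pi.single l' (MonoidAlgebra.of ℤ G (σ l) - 1)
        - Pi.single l (MonoidAlgebra.of ℤ G (σ l') - 1)}

lemma span_rel [Fintype G] {s : ℕ} {σ : Fin s → G} {x : Fin s → MonoidAlgebra ℤ G}
    (hx : x ∈ Submodule.span (MonoidAlgebra ℤ G) (genSet σ)) :
    ∑ l, x l * (MonoidAlgebra.of ℤ G (σ l) - 1) = 0 := by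
  induction hx using Submodule.span_induction with
  | mem v hv =>
    rcases hv with ⟨l, rfl⟩ | ⟨l, l', hll', rfl⟩
    · beta_reduce
      rw [Finset.sum_eq_single l]
      · rw [Pi.single_eq_same]; exact nu_mul_tau (σ l)
      · intro m _ hm; rw [Pi.single_eq_of_ne hm, zero_mul]
      · intro h; exact absurd (Finset.mem_univ l) h
    · simp only [Pi.sub_apply, sub_mul, Finset.sum_sub_distrib]
      rw [Finset.sum_eq_single l', Finset.sum_eq_single l]
      · rw [Pi.single_eq_same, Pi.single_eq_same, mul_comm, sub_self]
      · intro m _ hm; rw [Pi.single_eq_of_ne hm, zero_mul]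
      · intro h; exact absurd (Finset.mem_univ l) h
      · intro m _ hm; rw [Pi.single_eq_of_ne hm, zero_mul]
      · intro h; exact absurd (Finset.mem_univ l') h
  | zero => simp
  | add a b _ _ ha hb =>
    simp only [Pi.add_apply, add_mul, Finset.sum_add_distrib, ha, hb, add_zero]
  | smul c a _ ha =>
    simp only [Pi.smul_apply, smul_eq_mul, mul_assoc, ← Finset.mul_sum, ha, mul_zero]

lemma map_pi_single {R R' : Type} [Semiring R] [Semiring R'] {s : ℕ} (f : R →+* R')
    (i j : Fin s) (a : R) :
    f ((Pi.single i a : Fin s → R) j) = (Pi.single i (f a) : Fin s → R') j := by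
  rcases eq_or_ne j i with rfl | h
  · rw [Pi.single_eq_same, Pi.single_eq_same]
  · rw [Pi.single_eq_of_ne h, Pi.single_eq_of_ne h, map_zero]

lemma single_castSucc {R' : Type} [Zero R'] {s : ℕ} (l m : Fin s) (c : R') :
    (Pi.single (Fin.castSucc l) c : Fin (s+1) → R') (Fin.castSucc m)
      = (Pi.single l c : Fin s → R') m := by
  rcases eq_or_ne m l with rfl | h
  · rw [Pi.single_eq_same, Pi.single_eq_same]
  · rw [Pi.single_eq_of_ne h, Pi.single_eq_of_ne (fun hc => h (Fin.castSucc_injective _ hc))]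

lemma pi_surjective [Fintype G] (K : Subgroup G) [Fintype (G ⧸ K)]
    (y : MonoidAlgebra ℤ (G ⧸ K)) :
    ∃ c, MonoidAlgebra.mapDomainRingHom ℤ (QuotientGroup.mk' K) c = y := by
  classical
  refine ⟨∑ q : G ⧸ K, MonoidAlgebra.single q.out (y.coeff q), ?_⟩
  rw [map_sum]
  have h1 : ∀ q : G ⧸ K,
      MonoidAlgebra.mapDomainRingHom ℤ (QuotientGroup.mk' K) (MonoidAlgebra.single q.out (y.coeff q))
        = MonoidAlgebra.single q (y.coeff q) := by
    intro q
    show MonoidAlgebra.mapDomain (QuotientGroup.mk' K) (MonoidAlgebra.single q.out (y.coeff q)) = _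
    rw [MonoidAlgebra.mapDomain_single, QuotientGroup.mk'_apply, QuotientGroup.out_eq']
  rw [Finset.sum_congr rfl fun q _ => h1 q, ← sum_single_eq]

lemma pi_nu [Fintype G] {s : ℕ} {I : Subgroup G} {σ : Fin (s+1) → G} (hdec : IsDecomp I σ)
    [Fintype (G ⧸ Subgroup.zpowers (σ (Fin.last s)))] (l : Fin s) :
    MonoidAlgebra.mapDomainRingHom ℤ (QuotientGroup.mk' (Subgroup.zpowers (σ (Fin.last s))))
        (nuElt ℤ (Subgroup.zpowers (σ l.castSucc)))
      = nuElt ℤ (Subgroup.zpowers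
          ((QuotientGroup.mk (σ l.castSucc)) : G ⧸ Subgroup.zpowers (σ (Fin.last s)))) := by
  letI := Classical.decPred (· ∈ Subgroup.zpowers (σ l.castSucc))
  letI := Classical.decPred (· ∈ Subgroup.zpowers
    ((QuotientGroup.mk (σ l.castSucc)) : G ⧸ Subgroup.zpowers (σ (Fin.last s))))
  show MonoidAlgebra.mapDomainRingHom ℤ (QuotientGroup.mk' (Subgroup.zpowers (σ (Fin.last s))))
      (∑ h ∈ Finset.univ.filter (· ∈ Subgroup.zpowers (σ l.castSucc)),
        MonoidAlgebra.of ℤ G h)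
    = ∑ h' ∈ Finset.univ.filter
        (· ∈ Subgroup.zpowers ((QuotientGroup.mk (σ l.castSucc)) : G ⧸ Subgroup.zpowers (σ (Fin.last s)))),
        MonoidAlgebra.of ℤ (G ⧸ Subgroup.zpowers (σ (Fin.last s))) h'
  rw [map_sum]
  refine Finset.sum_nbij (fun h => (QuotientGroup.mk h : G ⧸ Subgroup.zpowers (σ (Fin.last s)))) ?_ ?_ ?_ ?_
  · intro h hh
    simp only [Finset.mem_filter, Finset.mem_univ, true_and] at hh ⊢
    obtain ⟨k, hk⟩ := Subgroup.mem_zpowers_iff.mp hh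
    exact Subgroup.mem_zpowers_iff.mpr ⟨k, by rw [← hk, QuotientGroup.mk_zpow]⟩
  · intro a ha b hb hab
    simp only [Finset.coe_filter, Set.mem_setOf_eq, Finset.mem_univ, true_and] at ha hb
    have hmem : a⁻¹ * b ∈ Subgroup.zpowers (σ (Fin.last s)) := QuotientGroup.eq.mp hab
    have hmem2 : a⁻¹ * b ∈ Subgroup.zpowers (σ l.castSucc) :=
      Subgroup.mul_mem _ (Subgroup.inv_mem _ ha) hb
    have h1 : a⁻¹ * b = 1 :=
      decomp_inter_trivial hdec (Fin.castSucc_lt_last l).ne hmem2 hmem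
    exact inv_mul_eq_one.mp h1
  · intro h' hh'
    simp only [Finset.coe_filter, Set.mem_setOf_eq, Finset.mem_univ, true_and,
      Set.mem_image] at hh' ⊢
    obtain ⟨k, hk⟩ := Subgroup.mem_zpowers_iff.mp hh'
    exact ⟨σ l.castSucc ^ k, Subgroup.mem_zpowers_iff.mpr ⟨k, rfl⟩,
      by rw [← hk, QuotientGroup.mk_zpow]⟩
  · intro h _
    show MonoidAlgebra.mapDomain (QuotientGroup.mk' (Subgroup.zpowers (σ (Fin.last s)))) (MonoidAlgebra.single h (1:ℤ)) = _
    rw [MonoidAlgebra.mapDomain_single]; rfl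

lemma key_rel (s : ℕ) : ∀ (G : Type) [CommGroup G] [Fintype G] (I : Subgroup G)
    (σ : Fin s → G), IsDecomp I σ → ∀ x : Fin s → MonoidAlgebra ℤ G,
    (∑ l, x l * (MonoidAlgebra.of ℤ G (σ l) - 1) = 0) →
    x ∈ Submodule.span (MonoidAlgebra ℤ G) (genSet σ) := by
  induction s with
  | zero =>
    intro G _ _ I σ hdec x hx
    have : x = 0 := funext fun l => l.elim0
    rw [this]; exact zero_mem _
  | succ s ih =>
    intro G _ _ I σ hdec x hx
    classical
    set K := Subgroup.zpowers (σ (Fin.last s)) with hK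
    letI : Fintype (G ⧸ K) := Fintype.ofFinite _
    set π := MonoidAlgebra.mapDomainRingHom ℤ (QuotientGroup.mk' K) with hπ
    set σ' : Fin s → G ⧸ K := fun l => QuotientGroup.mk (σ l.castSucc) with hσ'
    have hdec' : IsDecomp (I.map (QuotientGroup.mk' K)) σ' := decomp_quot hdec
    have hπof : ∀ g : G, π (MonoidAlgebra.of ℤ G g)
        = MonoidAlgebra.of ℤ (G ⧸ K) (QuotientGroup.mk g) := by
      intro g
      show MonoidAlgebra.mapDomain (QuotientGroup.mk' K) (MonoidAlgebra.single g (1:ℤ)) = _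
      rw [MonoidAlgebra.mapDomain_single]; rfl
    have hτlast : π (MonoidAlgebra.of ℤ G (σ (Fin.last s)) - 1) = 0 := by
      rw [map_sub, map_one, hπof,
        (QuotientGroup.eq_one_iff _).mpr (Subgroup.mem_zpowers _), map_one, sub_self]
    have hrel' : ∑ l : Fin s, π (x l.castSucc)
        * (MonoidAlgebra.of ℤ (G ⧸ K) (σ' l) - 1) = 0 := by
      have h0 := congrArg π hx
      rw [map_sum, map_zero, Fin.sum_univ_castSucc] at h0
      rw [show (π (x (Fin.last s) * (MonoidAlgebra.of ℤ G (σ (Fin.last s)) - 1)))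
          = 0 from by rw [map_mul, hτlast, mul_zero], add_zero] at h0
      rw [← h0]
      refine Finset.sum_congr rfl fun l _ => ?_
      rw [map_mul, map_sub, map_one, hπof]
    have hx' := ih (G ⧸ K) (I.map (QuotientGroup.mk' K)) σ' hdec'
      (fun l => π (x l.castSucc)) hrel'
    -- lift the span membership to G
    have hlift : ∀ y' : Fin s → MonoidAlgebra ℤ (G ⧸ K),
        y' ∈ Submodule.span (MonoidAlgebra ℤ (G ⧸ K)) (genSet σ') →
        ∃ w : Fin (s+1) → MonoidAlgebra ℤ G,
          w ∈ Submodule.span (MonoidAlgebra ℤ G) (genSet σ) ∧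
          ∀ l : Fin s, π (w l.castSucc) = y' l := by
      intro y' hy'
      induction hy' using Submodule.span_induction with
      | mem v hv =>
        rcases hv with ⟨l, rfl⟩ | ⟨l, l', hll', rfl⟩
        · refine ⟨Pi.single l.castSucc (nuElt ℤ (Subgroup.zpowers (σ l.castSucc))),
            Submodule.subset_span (Or.inl ⟨l.castSucc, rfl⟩), ?_⟩
          intro m
          rw [map_pi_single π l.castSucc m.castSucc, single_castSucc, pi_nu hdec]
        · refine ⟨Pi.single l'.castSucc (MonoidAlgebra.of ℤ G (σ l.castSucc) - 1)
              - Pi.single l.castSucc (MonoidAlgebra.of ℤ G (σ l'.castSucc) - 1),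
            Submodule.subset_span (Or.inr ⟨l.castSucc, l'.castSucc,
              Fin.castSucc_lt_castSucc_iff.mpr hll', rfl⟩), ?_⟩
          intro m
          rw [Pi.sub_apply, Pi.sub_apply, map_sub,
            map_pi_single π, map_pi_single π, single_castSucc, single_castSucc,
            map_sub, map_one, hπof, map_sub, map_one, hπof]
      | zero => exact ⟨0, zero_mem _, fun l => by rw [Pi.zero_apply, map_zero]; rfl⟩
      | add p q _ _ hp hq =>
        obtain ⟨w1, hw1, hw1'⟩ := hp
        obtain ⟨w2, hw2, hw2'⟩ := hq
        exact ⟨w1 + w2, add_mem hw1 hw2, fun l => by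
          rw [Pi.add_apply, map_add, hw1', hw2']; rfl⟩
      | smul c' p _ hp =>
        obtain ⟨w0, hw0, hw0'⟩ := hp
        obtain ⟨c, hc⟩ := pi_surjective K c'
        refine ⟨c • w0, Submodule.smul_mem _ c hw0, fun l => ?_⟩
        rw [Pi.smul_apply, smul_eq_mul, map_mul, hc, hw0']
        rw [Pi.smul_apply, smul_eq_mul]
    obtain ⟨w, hwmem, hwπ⟩ := hlift _ hx'
    set u : Fin (s+1) → MonoidAlgebra ℤ G := x - w with hu
    have hurel : ∑ l, u l * (MonoidAlgebra.of ℤ G (σ l) - 1) = 0 := by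
      have h1 := span_rel hwmem
      simp only [hu, Pi.sub_apply, sub_mul, Finset.sum_sub_distrib, hx, h1, sub_zero]
    have hucs : ∀ l : Fin s, u l.castSucc ∈ Ideal.span
        {(MonoidAlgebra.of ℤ G (σ (Fin.last s)) - 1)} := by
      intro l
      have h1 : π (u l.castSucc) = 0 := by
        rw [hu, Pi.sub_apply, map_sub, hwπ l, sub_self]
      have h2 : u l.castSucc ∈ RingHom.ker π := h1
      rw [hπ, ker_mk_eq_span] at h2
      have h3 : Ideal.span {x : MonoidAlgebra ℤ G | ∃ h ∈ K, x = MonoidAlgebra.of ℤ G h - 1}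
          ≤ Ideal.span {(MonoidAlgebra.of ℤ G (σ (Fin.last s)) - 1)} := by
        rw [Ideal.span_le]
        rintro _ ⟨h, hh, rfl⟩
        have h4 : h ∈ Subgroup.closure {σ (Fin.last s)} := by
          rw [← Subgroup.zpowers_eq_closure]; exact hh
        have h5 := of_sub_one_mem h4
        rwa [Set.image_singleton] at h5
      exact h3 h2
    have hex : ∀ l : Fin s, ∃ a, a * (MonoidAlgebra.of ℤ G (σ (Fin.last s)) - 1)
        = u l.castSucc := fun l => Ideal.mem_span_singleton'.mp (hucs l)
    choose a ha using hex
    have hfact : ((∑ l : Fin s, a l * (MonoidAlgebra.of ℤ G (σ l.castSucc) - 1))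
        + u (Fin.last s)) * (MonoidAlgebra.of ℤ G (σ (Fin.last s)) - 1) = 0 := by
      have h1 := hurel
      rw [Fin.sum_univ_castSucc] at h1
      calc ((∑ l : Fin s, a l * (MonoidAlgebra.of ℤ G (σ l.castSucc) - 1))
            + u (Fin.last s)) * (MonoidAlgebra.of ℤ G (σ (Fin.last s)) - 1)
          = (∑ l : Fin s, u l.castSucc * (MonoidAlgebra.of ℤ G (σ l.castSucc) - 1))
            + u (Fin.last s) * (MonoidAlgebra.of ℤ G (σ (Fin.last s)) - 1) := by
            rw [add_mul, Finset.sum_mul]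
            congr 1
            refine Finset.sum_congr rfl fun l _ => ?_
            rw [← ha l]; ring
        _ = 0 := h1
    have hb := mem_span_nu hfact
    obtain ⟨b, hbb⟩ := Ideal.mem_span_singleton'.mp hb
    set vrow : Fin s → (Fin (s+1) → MonoidAlgebra ℤ G) := fun l =>
      (Pi.single (Fin.last s) (MonoidAlgebra.of ℤ G (σ l.castSucc) - 1)
          : Fin (s+1) → MonoidAlgebra ℤ G)
        - Pi.single l.castSucc (MonoidAlgebra.of ℤ G (σ (Fin.last s)) - 1) with hvrow
    have hvrowval : ∀ l : Fin s, ∀ m : Fin (s+1), vrow l m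
        = (Pi.single (Fin.last s) (MonoidAlgebra.of ℤ G (σ l.castSucc) - 1)
            : Fin (s+1) → MonoidAlgebra ℤ G) m
          - (Pi.single l.castSucc (MonoidAlgebra.of ℤ G (σ (Fin.last s)) - 1)
            : Fin (s+1) → MonoidAlgebra ℤ G) m := fun l m => rfl
    have hvmem : ∀ l : Fin s, vrow l ∈ genSet σ := fun l =>
      Or.inr ⟨l.castSucc, Fin.last s, Fin.castSucc_lt_last l, rfl⟩
    have huval : u = (∑ l : Fin s, (-(a l)) • vrow l)
        + b • (Pi.single (Fin.last s) (nuElt ℤ (Subgroup.zpowers (σ (Fin.last s))))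
            : Fin (s+1) → MonoidAlgebra ℤ G) := by
      funext m
      induction m using Fin.lastCases with
      | last =>
        rw [Pi.add_apply, Finset.sum_apply, Pi.smul_apply, Pi.single_eq_same, smul_eq_mul]
        have hterm : ∀ l : Fin s, ((-(a l)) • vrow l) (Fin.last s)
            = -(a l * (MonoidAlgebra.of ℤ G (σ l.castSucc) - 1)) := by
          intro l
          rw [Pi.smul_apply, hvrowval, Pi.single_eq_same,
            Pi.single_eq_of_ne (Fin.castSucc_lt_last l).ne', sub_zero, smul_eq_mul]
          ring
        rw [Finset.sum_congr rfl fun l _ => hterm l, Finset.sum_neg_distrib, hbb]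
        ring
      | cast m =>
        rw [Pi.add_apply, Finset.sum_apply, Pi.smul_apply,
          Pi.single_eq_of_ne (Fin.castSucc_lt_last m).ne, smul_zero, add_zero]
        have hterm : ∀ l : Fin s, ((-(a l)) • vrow l) m.castSucc
            = if m = l then a l * (MonoidAlgebra.of ℤ G (σ (Fin.last s)) - 1) else 0 := by
          intro l
          rw [Pi.smul_apply, hvrowval,
            Pi.single_eq_of_ne (Fin.castSucc_lt_last m).ne, single_castSucc, smul_eq_mul]
          rcases eq_or_ne m l with rfl | h
          · rw [Pi.single_eq_same, if_pos rfl]; ring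
          · rw [Pi.single_eq_of_ne h, if_neg h]; ring
        rw [Finset.sum_congr rfl fun l _ => hterm l, Finset.sum_ite_eq Finset.univ m
          (fun l => a l * (MonoidAlgebra.of ℤ G (σ (Fin.last s)) - 1)),
          if_pos (Finset.mem_univ m), ha m]
    have hxeq : x = w + u := by rw [hu]; ring
    rw [hxeq]
    refine add_mem hwmem ?_
    rw [huval]
    refine add_mem (Submodule.sum_mem _ fun l _ => Submodule.smul_mem _ _
      (Submodule.subset_span (hvmem l)))
      (Submodule.smul_mem _ _ (Submodule.subset_span (Or.inl ⟨Fin.last s, rfl⟩)))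

end Helpers

/-- `M_s(ν_1, …, ν_s, τ_1, …, τ_s)` is a presentation matrix of `𝓘_I`:
(i) `𝓘_I` is generated by `τ_1, …, τ_s`; (ii) the kernel of the map `ℤ[G]^s → 𝓘_I`,
`e_l ↦ τ_l`, is generated by the vectors `ν_l·e_l` (`1 ≤ l ≤ s`) and
`τ_l·e_{l'} − τ_{l'}·e_l` (`1 ≤ l < l' ≤ s`). -/

theorem statement2 {G : Type} [CommGroup G] [Fintype G] (I : Subgroup G)
    {s : ℕ} (σ : Fin s → G) (hdec : IsDecomp I σ) :
    kerIdeal I = Ideal.span (Set.range fun l => MonoidAlgebra.of ℤ G (σ l) - 1) ∧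
    ∀ x : Fin s → MonoidAlgebra ℤ G,
      (∑ l, x l * (MonoidAlgebra.of ℤ G (σ l) - 1) = 0) ↔
        x ∈ Submodule.span (MonoidAlgebra ℤ G)
          ((Set.range fun l => Pi.single l (nuElt ℤ (Subgroup.zpowers (σ l)))) ∪
            {v | ∃ l l' : Fin s, l < l' ∧
              v = Pi.single l' (MonoidAlgebra.of ℤ G (σ l) - 1)
                - Pi.single l (MonoidAlgebra.of ℤ G (σ l') - 1)})  := by
  constructor
  · -- part (i)
    rw [kerIdeal, ker_mk_eq_span]
    apply le_antisymm
    · rw [Ideal.span_le]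
      rintro _ ⟨h, hh, rfl⟩
      have h4 : h ∈ Subgroup.closure (Set.range σ) := by
        obtain ⟨x, hx, -⟩ := hdec.2 h hh
        rw [← hx]
        refine Subgroup.prod_mem _ fun l _ => ?_
        have : Subgroup.zpowers (σ l) ≤ Subgroup.closure (Set.range σ) :=
          Subgroup.zpowers_le.mpr (Subgroup.subset_closure ⟨l, rfl⟩)
        exact this (x l).2
      have h5 := of_sub_one_mem h4
      rwa [← Set.range_comp] at h5
    · rw [Ideal.span_le]
      rintro _ ⟨l, rfl⟩
      exact Ideal.subset_span ⟨σ l, hdec.1 l, rfl⟩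
  · -- part (ii)
    intro x
    constructor
    · intro hx
      exact key_rel s G I σ hdec x hx
    · intro hx
      exact span_rel hx
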